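/- If N ≥ 2^K and all N pieces start at level 0, the attacker can always win: φ(S_0) = N·2^{-K} ≥ 1, so by the potential characterization the attacker has a winning strategy; conversely if N < 2^K the defender wins. Thus with all pieces at level 0 the game value is determined exactly by the comparison of N with 2^K. -/

import Mathlib

open Finset

/-- Potential of a state `S` (counts of pieces per level) in a game with `K` levels. -/
noncomputable def phi (K : ℕ) (S : ℕ → ℕ) : ℝ :=
  ∑ i ∈ Finset.range (K+1), (S i : ℝ) * (2:ℝ) ^ (-((K:ℤ) - i))

/-- Advance every piece one level. -/
def advance (S : ℕ → ℕ) : ℕ → ℕ := fun i => if i = 0 then 0 else S (i-1)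

/-- The attacker can force a win from state `S`: either a piece is already at level `K`,
or the attacker can present a partition `A, B` such that whichever part the defender
destroys, the attacker wins from the advanced surviving part. -/
inductive AttackerWins (K : ℕ) : (ℕ → ℕ) → Prop where
  | reach (S : ℕ → ℕ) : S K ≠ 0 → AttackerWins K S
  | step (S A B : ℕ → ℕ) : (∀ i, A i + B i = S i) →
      AttackerWins K (advance A) → AttackerWins K (advance B) → AttackerWins K S

/-- The defender can force a win from state `S`: either no pieces remain, or no piece is at
level `K` and for every partition `A, B` the attacker presents, the defender can destroy one
part so that the defender wins from the advanced other part. -/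
inductive DefenderWins (K : ℕ) : (ℕ → ℕ) → Prop where
  | empty (S : ℕ → ℕ) : (∀ i, S i = 0) → DefenderWins K S
  | step (S : ℕ → ℕ) (choice : (ℕ → ℕ) → (ℕ → ℕ) → Bool) : S K = 0 →
      (∀ A B : ℕ → ℕ, (∀ i, A i + B i = S i) →
        DefenderWins K (advance (if choice A B then A else B))) → DefenderWins K S

def wt (K : ℕ) (S : ℕ → ℕ) : ℕ := ∑ i ∈ Finset.range (K+1), S i * 2 ^ i
def dst (K : ℕ) (S : ℕ → ℕ) : ℕ := ∑ i ∈ Finset.range (K+1), S i * (K - i)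

lemma attacker_aux (K : ℕ) : ∀ k, k ≤ K → ∀ S : ℕ → ℕ, 2 ^ k ≤ S (K - k) → AttackerWins K S := by
  intro k
  induction k with
  | zero =>
    intro _ S h
    exact AttackerWins.reach S (by simpa using Nat.pos_iff_ne_zero.mp (lt_of_lt_of_le one_pos (by simpa using h)))
  | succ k ih =>
    intro hk S hS
    have hle : 2 ^ k ≤ S (K - (k+1)) := le_trans (Nat.pow_le_pow_right (by norm_num) (Nat.le_succ k)) hS
    have hpow : 2 ^ (k+1) = 2 ^ k + 2 ^ k := by ring
    refine AttackerWins.step S (fun i => if i = K - (k+1) then 2 ^ k else 0)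
      (fun i => S i - (if i = K - (k+1) then 2 ^ k else 0)) ?_ ?_ ?_
    · intro i
      by_cases hi : i = K - (k+1)
      · subst hi; simp; omega
      · simp [hi]
    · apply ih (by omega)
      have h1 : K - k ≠ 0 := by omega
      have h2 : K - k - 1 = K - (k+1) := by omega
      simp [advance, h1, h2]
    · apply ih (by omega)
      have h1 : K - k ≠ 0 := by omega
      have h2 : K - k - 1 = K - (k+1) := by omega
      simp only [advance, if_neg h1, h2]
      simp
      omega

lemma SK_zero (K : ℕ) (S : ℕ → ℕ) (hw : wt K S < 2 ^ K) : S K = 0 := by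
  by_contra h
  have h1 : 2 ^ K ≤ S K * 2 ^ K := Nat.le_mul_of_pos_left _ (Nat.pos_iff_ne_zero.mpr h)
  have h2 : S K * 2 ^ K ≤ wt K S :=
    Finset.single_le_sum (f := fun i => S i * 2 ^ i) (fun i _ => Nat.zero_le _)
      (Finset.self_mem_range_succ K)
  omega

lemma defender_aux (K : ℕ) : ∀ n, ∀ S : ℕ → ℕ, dst K S ≤ n → wt K S < 2 ^ K →
    (∀ i, K < i → S i = 0) → DefenderWins K S := by
  intro n
  induction n with
  | zero =>
    intro S hd hw hhi
    refine DefenderWins.empty S ?_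
    intro i
    rcases lt_trichotomy i K with hi | hi | hi
    · have hz : dst K S = 0 := Nat.le_zero.mp hd
      have := (Finset.sum_eq_zero_iff.mp hz) i (Finset.mem_range.mpr (by omega))
      have hKi : 0 < K - i := by omega
      exact mul_eq_zero.mp this |>.resolve_right (by omega)
    · exact hi ▸ SK_zero K S hw
    · exact hhi i hi
  | succ n ih =>
    intro S hd hw hhi
    by_cases hemp : ∀ i, S i = 0
    · exact DefenderWins.empty S hemp
    have hSK : S K = 0 := SK_zero K S hw
    refine DefenderWins.step S (fun A B => decide (wt K A ≤ wt K B)) hSK ?_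
    intro A B hAB
    set C := (if (decide (wt K A ≤ wt K B) : Bool) then A else B) with hC
    have hCle : ∀ i, C i ≤ S i := by
      intro i
      have := hAB i
      rw [hC]
      split <;> omega
    have hsum : wt K A + wt K B = wt K S := by
      unfold wt
      rw [← Finset.sum_add_distrib]
      exact Finset.sum_congr rfl (fun i _ => by rw [← add_mul, hAB i])
    have hwC : 2 * wt K C ≤ wt K S := by
      rw [hC]
      by_cases h : wt K A ≤ wt K B <;> simp [h] <;> omega
    -- advance facts
    have hwadv : wt K (advance C) ≤ 2 * wt K C := by
      unfold wt
      rw [Finset.sum_range_succ']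
      simp only [advance]
      have : ∀ i ∈ Finset.range K, (if i + 1 = 0 then 0 else C (i + 1 - 1)) * 2 ^ (i+1)
          = 2 * (C i * 2 ^ i) := by
        intro i _
        simp [pow_succ]
        ring
      rw [Finset.sum_congr rfl this]
      norm_num
      rw [← Finset.mul_sum]
      have : ∑ i ∈ Finset.range K, C i * 2 ^ i ≤ ∑ i ∈ Finset.range (K+1), C i * 2 ^ i := by
        rw [Finset.sum_range_succ]
        omega
      omega
    by_cases hCemp : ∀ i, C i = 0
    · refine DefenderWins.empty _ (fun i => ?_)
      simp only [advance]
      split <;> simp [hCemp]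
    push_neg at hCemp
    obtain ⟨j, hj⟩ := hCemp
    have hjK : j < K := by
      rcases lt_trichotomy j K with h | h | h
      · exact h
      · exact absurd (Nat.le_zero.mp (h ▸ hSK ▸ hCle K)) hj
      · exact absurd (Nat.le_zero.mp ((hhi j h) ▸ hCle j)) hj
    have hdC : dst K C ≤ dst K S :=
      Finset.sum_le_sum (fun i _ => Nat.mul_le_mul_right _ (hCle i))
    have hdadv : dst K (advance C) + 1 ≤ dst K C := by
      have e1 : dst K (advance C) = ∑ i ∈ Finset.range K, C i * (K - (i+1)) := by
        unfold dst
        rw [Finset.sum_range_succ']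
        simp [advance]
      have e2 : dst K C = ∑ i ∈ Finset.range K, C i * (K - i) := by
        unfold dst
        rw [Finset.sum_range_succ]
        simp
      have e3 : ∑ i ∈ Finset.range K, C i * (K - i)
          = (∑ i ∈ Finset.range K, C i * (K - (i+1))) + ∑ i ∈ Finset.range K, C i := by
        rw [← Finset.sum_add_distrib]
        refine Finset.sum_congr rfl (fun i hi => ?_)
        have hiK : i < K := Finset.mem_range.mp hi
        have h4 : K - (i+1) + 1 = K - i := by omega
        rw [← h4]; ring
      have h5 : 1 ≤ ∑ i ∈ Finset.range K, C i :=
        le_trans (Nat.pos_iff_ne_zero.mpr hj)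
          (Finset.single_le_sum (fun i _ => Nat.zero_le _) (Finset.mem_range.mpr hjK))
      omega
    apply ih
    · omega
    · omega
    · intro i hi
      simp only [advance, if_neg (by omega : ¬ i = 0)]
      rcases eq_or_lt_of_le (by omega : K ≤ i - 1) with h | h
      · exact Nat.le_zero.mp (hSK ▸ h ▸ hCle K)
      · exact Nat.le_zero.mp ((hhi _ h) ▸ hCle (i-1))

/-- With all `N` pieces at level 0 the game value is determined by comparing `N` with `2^K`:
the attacker wins iff `N ≥ 2^K`, the defender wins iff `N < 2^K`. -/
theorem stmt17 (K N : ℕ) (S : ℕ → ℕ) (h0 : S 0 = N) (hrest : ∀ i, i ≠ 0 → S i = 0) :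
    (2 ^ K ≤ N → AttackerWins K S) ∧ (N < 2 ^ K → DefenderWins K S) := by
  constructor
  · intro h
    exact attacker_aux K K le_rfl S (by simpa [Nat.sub_self, h0] using h)
  · intro h
    have hwt : wt K S = N := by
      unfold wt
      rw [Finset.sum_eq_single_of_mem 0 (Finset.mem_range.mpr (by omega))]
      · simpa using h0
      · intro b _ hb
        simp [hrest b hb]
    exact defender_aux K (dst K S) S le_rfl (by omega) (fun i hi => hrest i (by omega))
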